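/- arXiv:1007.3355 — 2 statements merged into one kernel-verified Lean document; each statement's English description precedes it below -/
import Mathlib

section
/- Let X be a topological space, regarded as an X-space via the identity map, and let Δ² denote the standard topological 2-simplex. Let Simp₂X be the quotient of Δ² × C(Δ², X) by the relations (p, σ) ∼ (p, σ') whenever p is a vertex of Δ² and σ(p) = σ'(p), regarded as an X-space via (p, σ) ↦ σ(p). Then Simp₂X is homotopy equivalent over X to the iterated fiberwise join X *_X (X *_X X), by a homotopy equivalence whose maps and homotopies are maps over X. -/
/-!
STATEMENT 2: `Simp₂X`, the quotient of `Δ² × C(Δ², X)` identifying maps at vertices,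
is homotopy equivalent over `X` to the iterated fiberwise join `X *_X (X *_X X)`.
-/

open unitInterval

variable {X Y Z : Type} [TopologicalSpace X] [TopologicalSpace Y] [TopologicalSpace Z]

/-- The space of tuples `(t, γ, y, z)` with `γ 0 = pY y` and `γ 1 = pZ z`. -/
abbrev JoinPre (pY : C(Y, X)) (pZ : C(Z, X)) : Type _ :=
  {q : unitInterval × C(unitInterval, X) × Y × Z //
    q.2.1 0 = pY q.2.2.1 ∧ q.2.1 1 = pZ q.2.2.2}

/-- The edge identifications defining the fiberwise join. -/
def JoinRel (pY : C(Y, X)) (pZ : C(Z, X)) (a b : JoinPre pY pZ) : Prop :=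
  (a.1.1 = 0 ∧ b.1.1 = 0 ∧ a.1.2.2.1 = b.1.2.2.1) ∨
  (a.1.1 = 1 ∧ b.1.1 = 1 ∧ a.1.2.2.2 = b.1.2.2.2)

/-- The fiberwise join `Y *_X Z`. -/
abbrev FibJoin (pY : C(Y, X)) (pZ : C(Z, X)) : Type _ := Quot (JoinRel pY pZ)

/-- The structure map `Y *_X Z → X`: evaluation at the distinguished point. -/
noncomputable def fibJoinProj (pY : C(Y, X)) (pZ : C(Z, X)) : C(FibJoin pY pZ, X) where
  toFun := Quot.lift (fun q => q.1.2.1 q.1.1) (by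
    rintro a b (⟨ha, hb, h⟩ | ⟨ha, hb, h⟩)
    · show a.1.2.1 a.1.1 = b.1.2.1 b.1.1
      rw [ha, hb, a.2.1, b.2.1, h]
    · show a.1.2.1 a.1.1 = b.1.2.1 b.1.1
      rw [ha, hb, a.2.2, b.2.2, h])
  continuous_toFun := by
    apply continuous_quot_lift
    exact continuous_eval.comp
      (by fun_prop : Continuous fun q : JoinPre pY pZ => (q.1.2.1, q.1.1))


/-- The standard topological 2-simplex. -/
abbrev Delta2 : Type := ↥(stdSimplex ℝ (Fin 3))

/-- The identifications defining `Simp₂X`: `(p, σ) ∼ (p, σ')` whenever `p` is a vertex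
of `Δ²` and `σ p = σ' p`. -/
def Simp2Rel (X : Type) [TopologicalSpace X] (a b : Delta2 × C(Delta2, X)) : Prop :=
  a.1 = b.1 ∧ (∃ i : Fin 3, (a.1 : Fin 3 → ℝ) = Pi.single i 1) ∧ a.2 a.1 = b.2 b.1

/-- The space of "pointed singular 2-simplices" in `X`, with edge identifications. -/
abbrev Simp2 (X : Type) [TopologicalSpace X] : Type := Quot (Simp2Rel X)

/-- The structure map `Simp₂X → X`, `(p, σ) ↦ σ p`. -/
noncomputable def simp2Proj (X : Type) [TopologicalSpace X] : C(Simp2 X, X) where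
  toFun := Quot.lift (fun a => a.2 a.1) (fun _ _ h => h.2.2)
  continuous_toFun := by
    apply continuous_quot_lift
    exact continuous_eval.comp
      (by fun_prop : Continuous fun a : Delta2 × C(Delta2, X) => (a.2, a.1))

/-! ### Auxiliary infrastructure -/

noncomputable section SimpJoinAux

instance : CompactSpace Delta2 := isCompact_iff_compactSpace.mp (isCompact_stdSimplex _ _)

lemma mem01 {r : ℝ} (h0 : 0 ≤ r) (h1 : r ≤ 1) : r ∈ unitInterval := ⟨h0, h1⟩

namespace SimpJoin

variable {X : Type} [TopologicalSpace X]

/-- coordinates of a point of `Δ²`. -/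
def c0 (p : Delta2) : ℝ := (p : Fin 3 → ℝ) 0
def c1 (p : Delta2) : ℝ := (p : Fin 3 → ℝ) 1
def c2 (p : Delta2) : ℝ := (p : Fin 3 → ℝ) 2

lemma c_nonneg (p : Delta2) : 0 ≤ c0 p ∧ 0 ≤ c1 p ∧ 0 ≤ c2 p :=
  ⟨p.2.1 0, p.2.1 1, p.2.1 2⟩

lemma c_sum (p : Delta2) : c0 p + c1 p + c2 p = 1 := by
  have := p.2.2
  rwa [Fin.sum_univ_three] at this

lemma continuous_c0 : Continuous (c0 : Delta2 → ℝ) :=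
  (continuous_apply _).comp continuous_subtype_val
lemma continuous_c1 : Continuous (c1 : Delta2 → ℝ) :=
  (continuous_apply _).comp continuous_subtype_val
lemma continuous_c2 : Continuous (c2 : Delta2 → ℝ) :=
  (continuous_apply _).comp continuous_subtype_val

/-- Build a point of `Δ²`. -/
def mkD2 (a b c : ℝ) (ha : 0 ≤ a) (hb : 0 ≤ b) (hc : 0 ≤ c) (h : a + b + c = 1) : Delta2 :=
  ⟨![a, b, c], by
    constructor
    · intro i
      fin_cases i <;> simpa
    · rw [Fin.sum_univ_three]
      simpa using h⟩

@[simp] lemma mkD2_c0 (a b c ha hb hc h) : c0 (mkD2 a b c ha hb hc h) = a := rfl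
@[simp] lemma mkD2_c1 (a b c ha hb hc h) : c1 (mkD2 a b c ha hb hc h) = b := rfl
@[simp] lemma mkD2_c2 (a b c ha hb hc h) : c2 (mkD2 a b c ha hb hc h) = c := rfl

lemma d2_ext {p q : Delta2} (h0 : c0 p = c0 q) (h1 : c1 p = c1 q) (h2 : c2 p = c2 q) :
    p = q := by
  apply Subtype.ext
  funext i
  fin_cases i <;> assumption

lemma continuous_mkD2 {α : Type} [TopologicalSpace α] {f g h : α → ℝ}
    (hf : Continuous f) (hg : Continuous g) (hh : Continuous h)
    {pa : ∀ x, 0 ≤ f x} {pb : ∀ x, 0 ≤ g x} {pc : ∀ x, 0 ≤ h x}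
    {ps : ∀ x, f x + g x + h x = 1} :
    Continuous fun x => mkD2 (f x) (g x) (h x) (pa x) (pb x) (pc x) (ps x) := by
  apply Continuous.subtype_mk
  apply continuous_pi
  intro i
  fin_cases i <;> simpa

/-- the three vertices as `Pi.single` values -/
lemma single_eq_vec (i : Fin 3) :
    (Pi.single i (1:ℝ) : Fin 3 → ℝ) =
      ![![1,0,0], ![0,1,0], ![0,0,1]] i := by
  fin_cases i <;> · funext j; fin_cases j <;> simp [Pi.single_apply, Fin.ext_iff, Matrix.vecHead, Matrix.vecTail]

lemma single0 : (Pi.single (0 : Fin 3) (1:ℝ) : Fin 3 → ℝ) = ![1,0,0] := single_eq_vec 0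
lemma single1 : (Pi.single (1 : Fin 3) (1:ℝ) : Fin 3 → ℝ) = ![0,1,0] := single_eq_vec 1
lemma single2 : (Pi.single (2 : Fin 3) (1:ℝ) : Fin 3 → ℝ) = ![0,0,1] := single_eq_vec 2

end SimpJoin
end SimpJoinAux

section Chunk2
open ContinuousMap
namespace SimpJoin

variable {X : Type} [TopologicalSpace X]

abbrev JP1 (X : Type) [TopologicalSpace X] :=
  JoinPre (ContinuousMap.id X) (ContinuousMap.id X)
abbrev JQ1 (X : Type) [TopologicalSpace X] :=
  FibJoin (ContinuousMap.id X) (ContinuousMap.id X)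
noncomputable abbrev pr1 (X : Type) [TopologicalSpace X] : C(JQ1 X, X) :=
  fibJoinProj (ContinuousMap.id X) (ContinuousMap.id X)
abbrev JP2 (X : Type) [TopologicalSpace X] := JoinPre (ContinuousMap.id X) (pr1 X)
abbrev JQ2 (X : Type) [TopologicalSpace X] := FibJoin (ContinuousMap.id X) (pr1 X)
noncomputable abbrev pr2 (X : Type) [TopologicalSpace X] : C(JQ2 X, X) :=
  fibJoinProj (ContinuousMap.id X) (pr1 X)

@[simp] lemma pr1_mk (r : JP1 X) : pr1 X (Quot.mk _ r) = r.1.2.1 r.1.1 := rfl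
@[simp] lemma pr2_mk (q : JP2 X) : pr2 X (Quot.mk _ q) = q.1.2.1 q.1.1 := rfl

/-- The coordinate of a point of `X *_X X`; well-defined. -/
def uC : JQ1 X → unitInterval :=
  Quot.lift (fun r => r.1.1) (by
    rintro a b (⟨ha, hb, _⟩ | ⟨ha, hb, _⟩) <;> · show a.1.1 = b.1.1; rw [ha, hb])

lemma continuous_uC : Continuous (uC : JQ1 X → unitInterval) :=
  continuous_quot_lift _ (by fun_prop)

@[simp] lemma uC_mk (r : JP1 X) : uC (Quot.mk _ r) = r.1.1 := rfl

/-! ### simplex geometry -/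

lemma maxmin (v c : ℝ) : max (v - c) 0 + min v c = v := by
  rcases le_total v c with h | h
  · rw [max_eq_right (by linarith), min_eq_left h]; ring
  · rw [max_eq_left (by linarith), min_eq_right h]; ring

/-- the point `(1-v, (v-c)⁺, v ∧ c)` of the simplex. -/
def aPt (c : unitInterval) (v : unitInterval) : Delta2 :=
  mkD2 (1 - v.1) (max (v.1 - c.1) 0) (min v.1 c.1)
    (by linarith [v.2.2]) (le_max_right _ _) (le_min v.2.1 c.2.1)
    (by have := maxmin v.1 c.1; linarith)

/-- the point `(0, 1-w, w)` of the simplex (edge from `v1` to `v2`). -/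
def ePt (w : unitInterval) : Delta2 :=
  mkD2 0 (1 - w.1) w.1 le_rfl (by linarith [w.2.2]) w.2.1 (by ring)

def vert0 : Delta2 := mkD2 1 0 0 zero_le_one le_rfl le_rfl (by ring)
def vert1 : Delta2 := mkD2 0 1 0 le_rfl zero_le_one le_rfl (by ring)
def vert2 : Delta2 := mkD2 0 0 1 le_rfl le_rfl zero_le_one (by ring)

lemma vert0_val : (vert0 : Fin 3 → ℝ) = Pi.single 0 1 := by rw [single0]; rfl
lemma vert1_val : (vert1 : Fin 3 → ℝ) = Pi.single 1 1 := by rw [single1]; rfl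
lemma vert2_val : (vert2 : Fin 3 → ℝ) = Pi.single 2 1 := by rw [single2]; rfl

lemma aPt_zero (c : unitInterval) : aPt c 0 = vert0 := by
  apply d2_ext <;>
    simp only [aPt, vert0, mkD2_c0, mkD2_c1, mkD2_c2, Set.Icc.coe_zero]
  · norm_num
  · rw [max_eq_right (by linarith [c.2.1])]
  · rw [min_eq_left c.2.1]

lemma aPt_one (c : unitInterval) : aPt c 1 = ePt c := by
  apply d2_ext <;>
    simp only [aPt, ePt, mkD2_c0, mkD2_c1, mkD2_c2, Set.Icc.coe_one]
  · norm_num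
  · rw [max_eq_left (by linarith [c.2.2])]
  · rw [min_eq_right c.2.2]

lemma ePt_zero : ePt (0 : unitInterval) = vert1 := by
  apply d2_ext <;>
    simp only [ePt, vert1, mkD2_c0, mkD2_c1, mkD2_c2, Set.Icc.coe_zero] <;> norm_num

lemma ePt_one : ePt (1 : unitInterval) = vert2 := by
  apply d2_ext <;>
    simp only [ePt, vert2, mkD2_c0, mkD2_c1, mkD2_c2, Set.Icc.coe_one] <;> norm_num

/-- `t`-coordinate: `λ₁+λ₂`. -/
def tOf (p : Delta2) : unitInterval :=
  ⟨c1 p + c2 p, mem01 (by have := c_nonneg p; linarith [this.2.1, this.2.2])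
    (by have := c_nonneg p; have := c_sum p; linarith [(c_nonneg p).1])⟩

def lam2 (p : Delta2) : unitInterval :=
  ⟨c2 p, mem01 (c_nonneg p).2.2
    (by have h := c_sum p; have h0 := (c_nonneg p).1; have h1 := (c_nonneg p).2.1; linarith)⟩

lemma continuous_tOf : Continuous (tOf : Delta2 → unitInterval) :=
  Continuous.subtype_mk (continuous_c1.add continuous_c2) _

lemma continuous_lam2 : Continuous (lam2 : Delta2 → unitInterval) :=
  Continuous.subtype_mk continuous_c2 _

lemma continuous_aPt {α : Type} [TopologicalSpace α] {f g : α → unitInterval}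
    (hf : Continuous f) (hg : Continuous g) : Continuous fun x => aPt (f x) (g x) := by
  have hf' : Continuous fun x => (f x : ℝ) := by fun_prop
  have hg' : Continuous fun x => (g x : ℝ) := by fun_prop
  exact continuous_mkD2 (by fun_prop) (by fun_prop) (by fun_prop)

lemma continuous_ePt {α : Type} [TopologicalSpace α] {f : α → unitInterval}
    (hf : Continuous f) : Continuous fun x => ePt (f x) := by
  have hf' : Continuous fun x => (f x : ℝ) := by fun_prop
  exact continuous_mkD2 (by fun_prop) (by fun_prop) (by fun_prop)

end SimpJoin
end Chunk2

section Chunk3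
namespace SimpJoin
variable {X : Type} [TopologicalSpace X]

/-- path family for `f`: `v ↦ σ (aPt λ₂ v)`. -/
def FGam : C((Delta2 × C(Delta2, X)) × unitInterval, X) :=
  ⟨fun q => q.1.2 (aPt (lam2 q.1.1) q.2),
    ContinuousEval.continuous_eval.comp
      ((continuous_snd.comp continuous_fst).prodMk
        (continuous_aPt (continuous_lam2.comp (continuous_fst.comp continuous_fst))
          continuous_snd))⟩

noncomputable def fGamma (a : Delta2 × C(Delta2, X)) : C(unitInterval, X) :=
  (ContinuousMap.curry FGam) a

lemma continuous_fGamma : Continuous (fGamma : Delta2 × C(Delta2, X) → C(unitInterval, X)) :=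
  (ContinuousMap.curry FGam).continuous

@[simp] lemma fGamma_apply (a : Delta2 × C(Delta2, X)) (v : unitInterval) :
    fGamma a v = a.2 (aPt (lam2 a.1) v) := rfl

/-- edge family for `f`: `w ↦ σ (ePt w)`. -/
def EGam : C((Delta2 × C(Delta2, X)) × unitInterval, X) :=
  ⟨fun q => q.1.2 (ePt q.2),
    ContinuousEval.continuous_eval.comp
      ((continuous_snd.comp continuous_fst).prodMk (continuous_ePt continuous_snd))⟩

noncomputable def fDelta (a : Delta2 × C(Delta2, X)) : C(unitInterval, X) :=
  (ContinuousMap.curry EGam) a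

lemma continuous_fDelta : Continuous (fDelta : Delta2 × C(Delta2, X) → C(unitInterval, X)) :=
  (ContinuousMap.curry EGam).continuous

@[simp] lemma fDelta_apply (a : Delta2 × C(Delta2, X)) (w : unitInterval) :
    fDelta a w = a.2 (ePt w) := rfl

noncomputable def fInner (a : Delta2 × C(Delta2, X)) : JP1 X :=
  ⟨(lam2 a.1, fDelta a, a.2 vert1, a.2 vert2),
    by show a.2 (ePt 0) = ContinuousMap.id X (a.2 vert1); rw [ePt_zero]; rfl,
    by show a.2 (ePt 1) = ContinuousMap.id X (a.2 vert2); rw [ePt_one]; rfl⟩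

noncomputable def fPre (a : Delta2 × C(Delta2, X)) : JP2 X :=
  ⟨(tOf a.1, fGamma a, a.2 vert0, Quot.mk _ (fInner a)),
    by show a.2 (aPt (lam2 a.1) 0) = ContinuousMap.id X (a.2 vert0); rw [aPt_zero]; rfl,
    by show a.2 (aPt (lam2 a.1) 1) = pr1 X (Quot.mk _ (fInner a))
       rw [pr1_mk]
       show _ = a.2 (ePt (lam2 a.1))
       rw [aPt_one]⟩

/-- key: the distinguished point of `fPre` maps to `σ p`. -/
lemma aPt_self (p : Delta2) : aPt (lam2 p) (tOf p) = p := by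
  have h0 := (c_nonneg p).1; have h1 := (c_nonneg p).2.1; have h2 := (c_nonneg p).2.2
  have hs := c_sum p
  apply d2_ext <;> simp only [aPt, mkD2_c0, mkD2_c1, mkD2_c2, tOf, lam2]
  · linarith
  · rw [max_eq_left (by linarith)]; ring
  · rw [min_eq_right (by linarith)]

lemma fPre_proj (a : Delta2 × C(Delta2, X)) :
    pr2 X (Quot.mk _ (fPre a)) = a.2 a.1 := by
  rw [pr2_mk]
  show a.2 (aPt (lam2 a.1) (tOf a.1)) = a.2 a.1
  rw [aPt_self]

lemma tOf_vert0 : tOf vert0 = 0 := Subtype.ext (by simp [tOf, vert0])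
lemma tOf_vert1 : tOf vert1 = 1 := Subtype.ext (by simp [tOf, vert1])
lemma tOf_vert2 : tOf vert2 = 1 := Subtype.ext (by simp [tOf, vert2])
lemma lam2_vert1 : lam2 vert1 = 0 := Subtype.ext (by simp [lam2, vert1])
lemma lam2_vert2 : lam2 vert2 = 1 := Subtype.ext (by simp [lam2, vert2])

lemma fwd (a b : Delta2 × C(Delta2, X)) (h : Simp2Rel X a b) :
    Quot.mk (JoinRel _ _) (fPre a) = Quot.mk (JoinRel _ _) (fPre b) := by
  obtain ⟨p, s1⟩ := a
  obtain ⟨q2, s2⟩ := b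
  obtain ⟨hp, ⟨i, hi⟩, hv⟩ := h
  dsimp at hp hi hv
  subst hp
  apply Quot.sound
  rw [single_eq_vec] at hi
  fin_cases i
  · obtain rfl : p = vert0 := Subtype.ext hi
    exact Or.inl ⟨tOf_vert0, tOf_vert0, hv⟩
  · obtain rfl : p = vert1 := Subtype.ext hi
    refine Or.inr ⟨tOf_vert1, tOf_vert1, ?_⟩
    show Quot.mk _ (fInner (vert1, s1)) = Quot.mk _ (fInner (vert1, s2))
    exact Quot.sound (Or.inl ⟨lam2_vert1, lam2_vert1, hv⟩)
  · obtain rfl : p = vert2 := Subtype.ext hi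
    refine Or.inr ⟨tOf_vert2, tOf_vert2, ?_⟩
    show Quot.mk _ (fInner (vert2, s1)) = Quot.mk _ (fInner (vert2, s2))
    exact Quot.sound (Or.inr ⟨lam2_vert2, lam2_vert2, hv⟩)

lemma continuous_fPre : Continuous (fPre : Delta2 × C(Delta2, X) → JP2 X) := by
  apply Continuous.subtype_mk
  refine (continuous_tOf.comp continuous_fst).prodMk
    (continuous_fGamma.prodMk ?_)
  refine (ContinuousEval.continuous_eval.comp
    (continuous_snd.prodMk continuous_const)).prodMk ?_
  refine continuous_quot_mk.comp ?_
  apply Continuous.subtype_mk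
  exact (continuous_lam2.comp continuous_fst).prodMk
    (continuous_fDelta.prodMk
      ((ContinuousEval.continuous_eval.comp (continuous_snd.prodMk continuous_const)).prodMk
        (ContinuousEval.continuous_eval.comp (continuous_snd.prodMk continuous_const))))

noncomputable def fMap : C(Simp2 X, JQ2 X) :=
  ⟨Quot.lift (fun a => Quot.mk _ (fPre a)) fwd,
    continuous_quot_lift _ (continuous_quot_mk.comp continuous_fPre)⟩

@[simp] lemma fMap_mk (a : Delta2 × C(Delta2, X)) :
    fMap (Quot.mk _ a) = Quot.mk _ (fPre a) := rfl

@[simp] lemma simp2Proj_mk (a : Delta2 × C(Delta2, X)) :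
    simp2Proj X (Quot.mk _ a) = a.2 a.1 := rfl

lemma fMap_proj (a : Simp2 X) : pr2 X (fMap a) = simp2Proj X a := by
  induction a using Quot.ind with
  | _ a => rw [fMap_mk, simp2Proj_mk, fPre_proj]

end SimpJoin
end Chunk3

section Chunk4
namespace SimpJoin
variable {X : Type} [TopologicalSpace X]

lemma mOf_nonneg (μ : Delta2) : 0 ≤ c1 μ + c2 μ := by
  have := c_nonneg μ; linarith [this.2.1, this.2.2]
lemma mOf_le_one (μ : Delta2) : c1 μ + c2 μ ≤ 1 := by
  have := (c_nonneg μ).1; have := c_sum μ; linarith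

/-- the reparametrisation value `m(1-t)+t²` as an element of `[0,1]`. -/
def eI (t : unitInterval) (μ : Delta2) : unitInterval :=
  ⟨(c1 μ + c2 μ) * (1 - t.1) + t.1 * t.1,
    mem01 (by nlinarith [mOf_nonneg μ, t.2.1, t.2.2])
      (by nlinarith [mOf_le_one μ, mOf_nonneg μ, t.2.1, t.2.2])⟩

lemma continuous_eI : Continuous fun q : unitInterval × Delta2 => eI q.1 q.2 := by
  apply Continuous.subtype_mk
  have h1 : Continuous fun q : unitInterval × Delta2 => c1 q.2 :=
    continuous_c1.comp continuous_snd
  have h2 : Continuous fun q : unitInterval × Delta2 => c2 q.2 :=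
    continuous_c2.comp continuous_snd
  have ht : Continuous fun q : unitInterval × Delta2 => (q.1 : ℝ) := by fun_prop
  fun_prop

/-- distinguished point for `g`. -/
def gPt (t u : unitInterval) : Delta2 :=
  mkD2 (1 - t.1) (t.1 * (1 - u.1)) (t.1 * u.1)
    (by linarith [t.2.2]) (by nlinarith [t.2.1, u.2.2]) (by nlinarith [t.2.1, u.2.1])
    (by ring)

lemma continuous_gPt {α : Type} [TopologicalSpace α] {f g : α → unitInterval}
    (hf : Continuous f) (hg : Continuous g) : Continuous fun x => gPt (f x) (g x) := by
  have hf' : Continuous fun x => (f x : ℝ) := by fun_prop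
  have hg' : Continuous fun x => (g x : ℝ) := by fun_prop
  exact continuous_mkD2 (by fun_prop) (by fun_prop) (by fun_prop)

/-- the map family for `g`. -/
def SG : C(JP2 X × Delta2, X) :=
  ⟨fun q => q.1.1.2.1 (eI q.1.1.1 q.2),
    ContinuousEval.continuous_eval.comp
      ((by fun_prop : Continuous fun q : JP2 X × Delta2 => q.1.1.2.1).prodMk
        (continuous_eI.comp
          ((by fun_prop : Continuous fun q : JP2 X × Delta2 => q.1.1.1).prodMk
            continuous_snd)))⟩

noncomputable def gSigma (q : JP2 X) : C(Delta2, X) := (ContinuousMap.curry SG) q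

lemma continuous_gSigma : Continuous (gSigma : JP2 X → C(Delta2, X)) :=
  (ContinuousMap.curry SG).continuous

@[simp] lemma gSigma_apply (q : JP2 X) (μ : Delta2) :
    gSigma q μ = q.1.2.1 (eI q.1.1 μ) := rfl

noncomputable def gPre (q : JP2 X) : Delta2 × C(Delta2, X) :=
  (gPt q.1.1 (uC q.1.2.2.2), gSigma q)

lemma gPt_zero (u : unitInterval) : gPt 0 u = vert0 := by
  apply d2_ext <;> simp [gPt, vert0]

lemma gPt_one (u : unitInterval) : gPt 1 u = ePt u := by
  apply d2_ext <;> simp [gPt, ePt]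

lemma eI_zero (μ : Delta2) : eI 0 μ = ⟨c1 μ + c2 μ, mem01 (mOf_nonneg μ) (mOf_le_one μ)⟩ :=
  Subtype.ext (by simp [eI])

lemma eI_one (μ : Delta2) : eI 1 μ = 1 := Subtype.ext (by simp [eI])

lemma eI_vert0 : eI (0 : unitInterval) vert0 = 0 := Subtype.ext (by simp [eI, vert0])

lemma gPre_proj (q : JP2 X) :
    (gPre q).2 (gPre q).1 = q.1.2.1 q.1.1 := by
  show q.1.2.1 (eI q.1.1 (gPt q.1.1 (uC q.1.2.2.2))) = q.1.2.1 q.1.1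
  congr 1
  apply Subtype.ext
  show (c1 (gPt _ _) + c2 (gPt _ _)) * _ + _ = _
  simp only [gPt, mkD2_c1, mkD2_c2]
  ring

lemma gwd (a b : JP2 X) (h : JoinRel (ContinuousMap.id X) (pr1 X) a b) :
    Quot.mk (Simp2Rel X) (gPre a) = Quot.mk (Simp2Rel X) (gPre b) := by
  obtain ⟨⟨t, γ, y, z⟩, h0, h1⟩ := a
  obtain ⟨⟨t', γ', y', z'⟩, h0', h1'⟩ := b
  rcases h with ⟨ha, hb, hy⟩ | ⟨ha, hb, hz⟩
  · simp only at ha hb hy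
    subst ha hb
    apply Quot.sound
    refine ⟨?_, ⟨0, ?_⟩, ?_⟩
    · show gPt 0 (uC z) = gPt 0 (uC z')
      rw [gPt_zero, gPt_zero]
    · show ((gPt 0 (uC z) : Delta2) : Fin 3 → ℝ) = _
      rw [gPt_zero, vert0_val]
    · show γ (eI 0 (gPt 0 (uC z))) = γ' (eI 0 (gPt 0 (uC z')))
      rw [gPt_zero, gPt_zero, eI_vert0]
      exact h0.trans (hy ▸ h0'.symm)
  · simp only at ha hb hz
    subst ha hb hz
    show Quot.mk _ (gPt 1 (uC z), gSigma _) = Quot.mk _ (gPt 1 (uC z), gSigma _)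
    congr 1
    refine Prod.ext rfl ?_
    apply ContinuousMap.ext
    intro μ
    show γ (eI 1 μ) = γ' (eI 1 μ)
    rw [eI_one]
    rw [show γ 1 = pr1 X z from h1, show γ' 1 = pr1 X z from h1']

noncomputable def gMap : C(JQ2 X, Simp2 X) :=
  ⟨Quot.lift (fun q => Quot.mk _ (gPre q)) gwd,
    continuous_quot_lift _ (continuous_quot_mk.comp
      ((continuous_gPt (by fun_prop) (continuous_uC.comp (by fun_prop))).prodMk
        continuous_gSigma))⟩

@[simp] lemma gMap_mk (q : JP2 X) : gMap (Quot.mk _ q) = Quot.mk _ (gPre q) := rfl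

lemma gMap_proj (b : JQ2 X) : simp2Proj X (gMap b) = pr2 X b := by
  induction b using Quot.ind with
  | _ q => rw [gMap_mk, simp2Proj_mk, gPre_proj, pr2_mk]

end SimpJoin
end Chunk4

section Chunk5
namespace SimpJoin
variable {X : Type} [TopologicalSpace X]

def hEv (s t m : ℝ) : ℝ := m * (1 - (1-s)*t) + ((1-s)*t)*t
def hCv (s t l2 m2 : ℝ) : ℝ := l2 + s*(m2 - l2*((1-s)*t + s))
def hRv (s t : ℝ) : ℝ := (1-s)*t + s

lemma hEv_mem {s t m : ℝ} (hs0 : 0 ≤ s) (hs1 : s ≤ 1) (ht0 : 0 ≤ t) (ht1 : t ≤ 1)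
    (hm0 : 0 ≤ m) (hm1 : m ≤ 1) : 0 ≤ hEv s t m ∧ hEv s t m ≤ 1 := by
  have htau0 : 0 ≤ (1-s)*t := mul_nonneg (by linarith) ht0
  have htau1 : (1-s)*t ≤ 1 := by nlinarith
  constructor
  · have := mul_nonneg hm0 (by linarith : (0:ℝ) ≤ 1 - (1-s)*t)
    have := mul_nonneg htau0 ht0
    simp only [hEv]; linarith
  · simp only [hEv]; nlinarith

lemma hCv_nonneg {s t l2 m2 : ℝ} (hs0 : 0 ≤ s) (hs1 : s ≤ 1) (ht0 : 0 ≤ t) (ht1 : t ≤ 1)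
    (hl0 : 0 ≤ l2) (hm2 : 0 ≤ m2) : 0 ≤ hCv s t l2 m2 := by
  have h1 : hRv s t ≤ 1 := by simp only [hRv]; nlinarith
  have h0 : 0 ≤ hRv s t := by
    simp only [hRv]; nlinarith
  have : s * hRv s t ≤ 1 := by nlinarith
  have : 0 ≤ l2 * (1 - s * hRv s t) := mul_nonneg hl0 (by linarith)
  have : 0 ≤ s * m2 := mul_nonneg hs0 hm2
  simp only [hCv, hRv] at *
  nlinarith

lemma lam2_le_tOf (p : Delta2) : (lam2 p).1 ≤ (tOf p).1 := by
  show c2 p ≤ c1 p + c2 p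
  linarith [(c_nonneg p).2.1]

/-- moving distinguished point of the homotopy `H`. -/
def hPt (s : unitInterval) (p : Delta2) : Delta2 :=
  mkD2 (1 - (tOf p).1) ((tOf p).1 - (lam2 p).1 * hRv s.1 (tOf p).1)
    ((lam2 p).1 * hRv s.1 (tOf p).1)
    (by linarith [(tOf p).2.2])
    (by
      have h1 : hRv s.1 (tOf p).1 ≤ 1 := by
        simp only [hRv]
        nlinarith [s.2.1, s.2.2, (tOf p).2.1, (tOf p).2.2]
      have h2 := lam2_le_tOf p
      nlinarith [(lam2 p).2.1])
    (mul_nonneg (lam2 p).2.1 (by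
      simp only [hRv]
      nlinarith [s.2.1, s.2.2, (tOf p).2.1, (tOf p).2.2]))
    (by ring)

/-- moving reparametrisation of the homotopy `H`. -/
def hBpt (s : unitInterval) (p : Delta2) (μ : Delta2) : Delta2 :=
  mkD2 (1 - hEv s.1 (tOf p).1 (c1 μ + c2 μ))
    (max (hEv s.1 (tOf p).1 (c1 μ + c2 μ) - hCv s.1 (tOf p).1 (lam2 p).1 (c2 μ)) 0)
    (min (hEv s.1 (tOf p).1 (c1 μ + c2 μ)) (hCv s.1 (tOf p).1 (lam2 p).1 (c2 μ)))
    (by linarith [(hEv_mem s.2.1 s.2.2 (tOf p).2.1 (tOf p).2.2 (mOf_nonneg μ)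
        (mOf_le_one μ)).2])
    (le_max_right _ _)
    (le_min (hEv_mem s.2.1 s.2.2 (tOf p).2.1 (tOf p).2.2 (mOf_nonneg μ) (mOf_le_one μ)).1
      (hCv_nonneg s.2.1 s.2.2 (tOf p).2.1 (tOf p).2.2 (lam2 p).2.1 (c_nonneg μ).2.2))
    (by have := maxmin (hEv s.1 (tOf p).1 (c1 μ + c2 μ))
          (hCv s.1 (tOf p).1 (lam2 p).1 (c2 μ)); linarith)

lemma continuous_hPt : Continuous fun q : unitInterval × Delta2 => hPt q.1 q.2 := by
  have h1 : Continuous fun q : unitInterval × Delta2 => (tOf q.2).1 :=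
    continuous_subtype_val.comp ((continuous_tOf).comp continuous_snd)
  have h2 : Continuous fun q : unitInterval × Delta2 => (lam2 q.2).1 :=
    continuous_subtype_val.comp ((continuous_lam2).comp continuous_snd)
  have h3 : Continuous fun q : unitInterval × Delta2 => (q.1 : ℝ) := by fun_prop
  exact continuous_mkD2 (by (try simp only [hRv]); fun_prop) (by (try simp only [hRv]); fun_prop)
    (by (try simp only [hRv]); fun_prop)

lemma continuous_hBpt :
    Continuous fun q : (unitInterval × Delta2) × Delta2 => hBpt q.1.1 q.1.2 q.2 := by
  have h1 : Continuous fun q : (unitInterval × Delta2) × Delta2 => (tOf q.1.2).1 :=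
    continuous_subtype_val.comp (continuous_tOf.comp (continuous_snd.comp continuous_fst))
  have h2 : Continuous fun q : (unitInterval × Delta2) × Delta2 => (lam2 q.1.2).1 :=
    continuous_subtype_val.comp (continuous_lam2.comp (continuous_snd.comp continuous_fst))
  have h3 : Continuous fun q : (unitInterval × Delta2) × Delta2 => (q.1.1 : ℝ) := by fun_prop
  have h4 : Continuous fun q : (unitInterval × Delta2) × Delta2 => c1 q.2 :=
    continuous_c1.comp continuous_snd
  have h5 : Continuous fun q : (unitInterval × Delta2) × Delta2 => c2 q.2 :=
    continuous_c2.comp continuous_snd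
  exact continuous_mkD2 (by (try simp only [hEv, hCv]); fun_prop)
    (by (try simp only [hEv, hCv]); fun_prop) (by (try simp only [hEv, hCv]); fun_prop)

/-- `hBpt` at the distinguished point recovers `p`. -/
lemma hB_self (s : unitInterval) (p : Delta2) : hBpt s p (hPt s p) = p := by
  have hl2t := lam2_le_tOf p
  have hkey1 : c1 (hPt s p) + c2 (hPt s p) = (tOf p).1 := by
    simp only [hPt, mkD2_c1, mkD2_c2]; ring
  have hkey2 : c2 (hPt s p) = (lam2 p).1 * hRv s.1 (tOf p).1 := by
    simp only [hPt, mkD2_c2]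
  have hE : hEv s.1 (tOf p).1 (c1 (hPt s p) + c2 (hPt s p)) = (tOf p).1 := by
    rw [hkey1]; simp only [hEv]; ring
  have hC : hCv s.1 (tOf p).1 (lam2 p).1 (c2 (hPt s p)) = (lam2 p).1 := by
    rw [hkey2]; simp only [hCv, hRv]; ring
  apply d2_ext <;> simp only [hBpt, mkD2_c0, mkD2_c1, mkD2_c2, hE, hC]
  · show 1 - (tOf p).1 = c0 p
    have := c_sum p; show _ = c0 p; simp only [tOf]; linarith
  · rw [max_eq_left (by linarith : (0:ℝ) ≤ (tOf p).1 - (lam2 p).1)]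
    show (tOf p).1 - (lam2 p).1 = c1 p
    simp only [tOf, lam2]; ring
  · rw [min_eq_right hl2t]
    rfl

/-- vertex stability of `hPt`. -/
lemma hPt_vert0 (s : unitInterval) : hPt s vert0 = vert0 := by
  have ht : ((tOf vert0 : unitInterval) : ℝ) = 0 := by rw [tOf_vert0]; rfl
  have hl : ((lam2 vert0 : unitInterval) : ℝ) = 0 := rfl
  apply d2_ext <;> simp only [hPt, mkD2_c0, mkD2_c1, mkD2_c2, ht, hl] <;>
    norm_num [vert0]
lemma hPt_vert1 (s : unitInterval) : hPt s vert1 = vert1 := by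
  have ht : ((tOf vert1 : unitInterval) : ℝ) = 1 := by rw [tOf_vert1]; rfl
  have hl : ((lam2 vert1 : unitInterval) : ℝ) = 0 := rfl
  apply d2_ext <;> simp only [hPt, mkD2_c0, mkD2_c1, mkD2_c2, ht, hl] <;>
    norm_num [vert1]
lemma hPt_vert2 (s : unitInterval) : hPt s vert2 = vert2 := by
  have ht : ((tOf vert2 : unitInterval) : ℝ) = 1 := by rw [tOf_vert2]; rfl
  have hl : ((lam2 vert2 : unitInterval) : ℝ) = 1 := rfl
  have hr : hRv s.1 1 = 1 := by simp only [hRv]; ring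
  apply d2_ext <;> simp only [hPt, mkD2_c0, mkD2_c1, mkD2_c2, ht, hl, hr] <;>
    norm_num [vert2]

/-- the underlying jointly-continuous map of the homotopy `H`. -/
def HF : C(((Delta2 × C(Delta2, X)) × unitInterval) × Delta2, X) :=
  ⟨fun q => q.1.1.2 (hBpt q.1.2 q.1.1.1 q.2),
    ContinuousEval.continuous_eval.comp
      ((by fun_prop : Continuous fun q : ((Delta2 × C(Delta2, X)) × unitInterval) × Delta2 =>
          q.1.1.2).prodMk
        (continuous_hBpt.comp
          ((by fun_prop : Continuous fun q : ((Delta2 × C(Delta2, X)) × unitInterval) × Delta2 =>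
            (q.1.2, q.1.1.1)).prodMk continuous_snd)))⟩

noncomputable def hSig (a : Delta2 × C(Delta2, X)) (s : unitInterval) : C(Delta2, X) :=
  (ContinuousMap.curry HF) (a, s)

@[simp] lemma hSig_apply (a : Delta2 × C(Delta2, X)) (s : unitInterval) (μ : Delta2) :
    hSig a s μ = a.2 (hBpt s a.1 μ) := rfl

/-- the homotopy `H` on representatives. -/
noncomputable def hPre (a : Delta2 × C(Delta2, X)) (s : unitInterval) :
    Delta2 × C(Delta2, X) := (hPt s a.1, hSig a s)

lemma hwd (a b : Delta2 × C(Delta2, X)) (h : Simp2Rel X a b) (s : unitInterval) :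
    Quot.mk (Simp2Rel X) (hPre a s) = Quot.mk (Simp2Rel X) (hPre b s) := by
  obtain ⟨p, s1⟩ := a
  obtain ⟨q2, s2⟩ := b
  obtain ⟨hp, ⟨i, hi⟩, hv⟩ := h
  dsimp at hp hi hv
  subst hp
  apply Quot.sound
  refine ⟨rfl, ⟨i, ?_⟩, ?_⟩
  · rw [single_eq_vec] at hi ⊢
    fin_cases i
    · obtain rfl : p = vert0 := Subtype.ext hi
      show ((hPt s vert0 : Delta2) : Fin 3 → ℝ) = _
      rw [hPt_vert0]; rfl
    · obtain rfl : p = vert1 := Subtype.ext hi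
      show ((hPt s vert1 : Delta2) : Fin 3 → ℝ) = _
      rw [hPt_vert1]; rfl
    · obtain rfl : p = vert2 := Subtype.ext hi
      show ((hPt s vert2 : Delta2) : Fin 3 → ℝ) = _
      rw [hPt_vert2]; rfl
  · show s1 (hBpt s p (hPt s p)) = s2 (hBpt s p (hPt s p))
    rw [hB_self]; exact hv

end SimpJoin
end Chunk5

section Chunk6
namespace SimpJoin
variable {X : Type} [TopologicalSpace X]

lemma hPt_zero (p : Delta2) : hPt 0 p = gPt (tOf p) (lam2 p) := by
  apply d2_ext <;> simp only [hPt, gPt, mkD2_c0, mkD2_c1, mkD2_c2, hRv] <;>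
    norm_num <;> ring

lemma hPt_one (p : Delta2) : hPt 1 p = p := by
  have hs := c_sum p
  apply d2_ext <;> simp only [hPt, mkD2_c0, mkD2_c1, mkD2_c2, hRv] <;> norm_num
  · show 1 - (c1 p + c2 p) = c0 p; linarith
  · show c1 p + c2 p - c2 p = c1 p; ring
  · rfl

lemma hBpt_zero (p μ : Delta2) : hBpt 0 p μ = aPt (lam2 p) (eI (tOf p) μ) := by
  have h1 : hEv ((0:unitInterval):ℝ) (tOf p).1 (c1 μ + c2 μ) = (eI (tOf p) μ).1 := by
    simp only [hEv, eI, Set.Icc.coe_zero]; ring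
  have h2 : hCv ((0:unitInterval):ℝ) (tOf p).1 (lam2 p).1 (c2 μ) = (lam2 p).1 := by
    simp only [hCv, Set.Icc.coe_zero]; ring
  apply d2_ext <;>
    simp only [hBpt, aPt, mkD2_c0, mkD2_c1, mkD2_c2] <;>
    simp only [h1, h2]

lemma hBpt_one (p μ : Delta2) : hBpt 1 p μ = μ := by
  have h1 : hEv ((1:unitInterval):ℝ) (tOf p).1 (c1 μ + c2 μ) = c1 μ + c2 μ := by
    simp only [hEv, Set.Icc.coe_one]; ring
  have h2 : hCv ((1:unitInterval):ℝ) (tOf p).1 (lam2 p).1 (c2 μ) = c2 μ := by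
    simp only [hCv, hRv, Set.Icc.coe_one]; ring
  have hc1 := (c_nonneg μ).2.1
  have hc2 := (c_nonneg μ).2.2
  apply d2_ext <;>
    simp only [hBpt, mkD2_c0, mkD2_c1, mkD2_c2] <;>
    simp only [h1, h2]
  · have := c_sum μ; linarith
  · rw [show c1 μ + c2 μ - c2 μ = c1 μ by ring, max_eq_left hc1]
  · rw [min_eq_right (by linarith)]

/-- `H` packaged on representatives. -/
noncomputable def HQmk : C((Delta2 × C(Delta2, X)) × unitInterval, Simp2 X) :=
  ⟨fun q => Quot.mk _ (hPre q.1 q.2),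
    continuous_quot_mk.comp
      ((continuous_hPt.comp (continuous_snd.prodMk
          (continuous_fst.comp continuous_fst))).prodMk
        (ContinuousMap.curry HF).continuous)⟩

noncomputable def HLift : Simp2 X → C(unitInterval, Simp2 X) :=
  Quot.lift (fun a => (ContinuousMap.curry HQmk) a)
    (fun a b h => ContinuousMap.ext fun s => hwd a b h s)

lemma continuous_HLift : Continuous (HLift : Simp2 X → C(unitInterval, Simp2 X)) :=
  continuous_quot_lift _ (ContinuousMap.curry HQmk).continuous

@[simp] lemma HLift_mk (a : Delta2 × C(Delta2, X)) (s : unitInterval) :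
    HLift (Quot.mk _ a) s = Quot.mk (Simp2Rel X) (hPre a s) := rfl

noncomputable def HHom : (gMap.comp (fMap : C(Simp2 X, JQ2 X))).Homotopy
    (ContinuousMap.id (Simp2 X)) where
  toFun := fun q => HLift q.2 q.1
  continuous_toFun := by
    have h := (ContinuousMap.uncurry
      (⟨HLift, continuous_HLift⟩ : C(Simp2 X, C(unitInterval, Simp2 X)))).continuous
    exact h.comp (continuous_snd.prodMk continuous_fst)
  map_zero_left := by
    intro x
    induction x using Quot.ind with
    | _ a =>
      show Quot.mk (Simp2Rel X) (hPre a 0) = gMap (fMap (Quot.mk _ a))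
      rw [fMap_mk, gMap_mk]
      have h1 : (hPre a 0).1 = (gPre (fPre a)).1 := by
        show hPt 0 a.1 = gPt (tOf a.1) (uC (Quot.mk _ (fInner a)))
        rw [uC_mk]
        exact hPt_zero a.1
      have h2 : (hPre a 0).2 = (gPre (fPre a)).2 := by
        apply ContinuousMap.ext
        intro μ
        show a.2 (hBpt 0 a.1 μ) = (fPre a).1.2.1 (eI (fPre a).1.1 μ)
        show a.2 (hBpt 0 a.1 μ) = a.2 (aPt (lam2 a.1) (eI (tOf a.1) μ))
        rw [hBpt_zero]
      rw [show hPre a 0 = gPre (fPre a) from Prod.ext h1 h2]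
  map_one_left := by
    intro x
    induction x using Quot.ind with
    | _ a =>
      show Quot.mk (Simp2Rel X) (hPre a 1) = Quot.mk _ a
      have h1 : (hPre a 1).1 = a.1 := hPt_one a.1
      have h2 : (hPre a 1).2 = a.2 := by
        apply ContinuousMap.ext
        intro μ
        show a.2 (hBpt 1 a.1 μ) = a.2 μ
        rw [hBpt_one]
      rw [show hPre a 1 = a from Prod.ext h1 h2]

lemma HHom_over (s : unitInterval) (x : Simp2 X) :
    simp2Proj X (HHom (s, x)) = simp2Proj X x := by
  induction x using Quot.ind with
  | _ a =>
    show simp2Proj X (Quot.mk (Simp2Rel X) (hPre a s)) =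
      simp2Proj X (Quot.mk (Simp2Rel X) a)
    rw [simp2Proj_mk, simp2Proj_mk]
    show a.2 (hBpt s a.1 (hPt s a.1)) = a.2 a.1
    rw [hB_self]

end SimpJoin
end Chunk6

section Chunk7
namespace SimpJoin
variable {X : Type} [TopologicalSpace X]

lemma convex_mem {s a b : ℝ} (hs0 : 0 ≤ s) (hs1 : s ≤ 1)
    (ha : a ∈ unitInterval) (hb : b ∈ unitInterval) : (1-s)*a + s*b ∈ unitInterval := by
  constructor <;> nlinarith [ha.1, ha.2, hb.1, hb.2]

lemma eVmem (t v : unitInterval) : v.1*(1-t.1) + t.1*t.1 ∈ unitInterval := by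
  constructor <;> nlinarith [t.2.1, t.2.2, v.2.1, v.2.2]

/-- the reparametrisation of the outer path during stage A. -/
def ellPt (s t v : unitInterval) : unitInterval :=
  ⟨(1-s.1)*(v.1*(1-t.1) + t.1*t.1) + s.1*v.1, convex_mem s.2.1 s.2.2 (eVmem t v) v.2⟩

lemma continuous_ellPt {α : Type} [TopologicalSpace α] {f g h : α → unitInterval}
    (hf : Continuous f) (hg : Continuous g) (hh : Continuous h) :
    Continuous fun x => ellPt (f x) (g x) (h x) := by
  apply Continuous.subtype_mk
  have h1 : Continuous fun x => (f x : ℝ) := by fun_prop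
  have h2 : Continuous fun x => (g x : ℝ) := by fun_prop
  have h3 : Continuous fun x => (h x : ℝ) := by fun_prop
  fun_prop

lemma ellPt_self (s t : unitInterval) : ellPt s t t = t :=
  Subtype.ext (by show (1-s.1)*(t.1*(1-t.1) + t.1*t.1) + s.1*t.1 = t.1; ring)

/-- stage-A outer path family. -/
def KAF : C((JP2 X × unitInterval) × unitInterval, X) :=
  ⟨fun w => w.1.1.1.2.1 (ellPt w.1.2 w.1.1.1.1 w.2),
    ContinuousEval.continuous_eval.comp
      ((by fun_prop : Continuous fun w : (JP2 X × unitInterval) × unitInterval =>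
          w.1.1.1.2.1).prodMk
        (continuous_ellPt (continuous_snd.comp continuous_fst)
          ((by fun_prop : Continuous fun w : (JP2 X × unitInterval) × unitInterval =>
            w.1.1.1.1))
          continuous_snd))⟩

noncomputable def kaGamma (q : JP2 X) (s : unitInterval) : C(unitInterval, X) :=
  (ContinuousMap.curry KAF) (q, s)

@[simp] lemma kaGamma_apply (q : JP2 X) (s v : unitInterval) :
    kaGamma q s v = q.1.2.1 (ellPt s q.1.1 v) := rfl

/-- degenerate inner element `[u, const x, x, x]`. -/
def cInner (u : unitInterval) (x : X) : JP1 X :=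
  ⟨(u, ContinuousMap.const _ x, x, x), rfl, rfl⟩

lemma continuous_cInner {α : Type} [TopologicalSpace α] {f : α → unitInterval}
    {g : α → X} (hf : Continuous f) (hg : Continuous g) :
    Continuous fun x => cInner (f x) (g x) := by
  apply Continuous.subtype_mk
  exact hf.prodMk ((ContinuousMap.const'.continuous_toFun.comp hg).prodMk (hg.prodMk hg))

def kaU (q : JP2 X) (s : unitInterval) : unitInterval :=
  ⟨(1-s.1)*(q.1.1.1*(uC q.1.2.2.2).1) + s.1*(uC q.1.2.2.2).1,
    convex_mem s.2.1 s.2.2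
      (by constructor <;>
        nlinarith [q.1.1.2.1, q.1.1.2.2, (uC q.1.2.2.2).2.1, (uC q.1.2.2.2).2.2])
      (uC q.1.2.2.2).2⟩

/-- the stage-A homotopy on representatives. -/
noncomputable def kaPre (q : JP2 X) (s : unitInterval) : JP2 X :=
  ⟨(q.1.1, kaGamma q s, kaGamma q s 0,
    Quot.mk _ (cInner (kaU q s) (kaGamma q s 1))), rfl, rfl⟩

/-- intermediate map `M` on representatives. -/
noncomputable def mPre (q : JP2 X) : JP2 X :=
  ⟨(q.1.1, q.1.2.1, q.1.2.2.1,
    Quot.mk _ (cInner (uC q.1.2.2.2) (q.1.2.1 1))), q.2.1, rfl⟩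

lemma mwd (a b : JP2 X) (h : JoinRel (ContinuousMap.id X) (pr1 X) a b) :
    Quot.mk (JoinRel (ContinuousMap.id X) (pr1 X)) (mPre a) =
    Quot.mk (JoinRel (ContinuousMap.id X) (pr1 X)) (mPre b) := by
  rcases h with ⟨ha, hb, hy⟩ | ⟨ha, hb, hz⟩
  · exact Quot.sound (Or.inl ⟨ha, hb, hy⟩)
  · refine Quot.sound (Or.inr ⟨ha, hb, ?_⟩)
    show Quot.mk _ (cInner (uC a.1.2.2.2) (a.1.2.1 1)) =
      Quot.mk _ (cInner (uC b.1.2.2.2) (b.1.2.1 1))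
    rw [hz]
    congr 1
    rw [show a.1.2.1 1 = pr1 X a.1.2.2.2 from a.2.2,
      show b.1.2.1 1 = pr1 X b.1.2.2.2 from b.2.2, hz]

lemma continuous_mPre : Continuous (mPre : JP2 X → JP2 X) := by
  apply Continuous.subtype_mk
  refine (by fun_prop : Continuous fun q : JP2 X => q.1.1).prodMk
    ((by fun_prop : Continuous fun q : JP2 X => q.1.2.1).prodMk
      ((by fun_prop : Continuous fun q : JP2 X => q.1.2.2.1).prodMk
        (continuous_quot_mk.comp (continuous_cInner
          (continuous_uC.comp (by fun_prop))
          (ContinuousEval.continuous_eval.comp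
            ((by fun_prop : Continuous fun q : JP2 X => q.1.2.1).prodMk
              continuous_const))))))

noncomputable def mMap : C(JQ2 X, JQ2 X) :=
  ⟨Quot.lift (fun q => Quot.mk _ (mPre q)) mwd,
    continuous_quot_lift _ (continuous_quot_mk.comp continuous_mPre)⟩

@[simp] lemma mMap_mk (q : JP2 X) : mMap (Quot.mk _ q) = Quot.mk _ (mPre q) := rfl

lemma kawd (s : unitInterval) (a b : JP2 X)
    (h : JoinRel (ContinuousMap.id X) (pr1 X) a b) :
    Quot.mk (JoinRel (ContinuousMap.id X) (pr1 X)) (kaPre a s) =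
    Quot.mk (JoinRel (ContinuousMap.id X) (pr1 X)) (kaPre b s) := by
  rcases h with ⟨ha, hb, hy⟩ | ⟨ha, hb, hz⟩
  · refine Quot.sound (Or.inl ⟨ha, hb, ?_⟩)
    show a.1.2.1 (ellPt s a.1.1 0) = b.1.2.1 (ellPt s b.1.1 0)
    rw [ha, hb]
    have h0 : ellPt s 0 0 = 0 := Subtype.ext (by
      show (1-s.1)*(0*(1-0) + 0*0) + s.1*0 = 0
      norm_num)
    rw [h0]
    rw [show a.1.2.1 0 = (ContinuousMap.id X) a.1.2.2.1 from a.2.1,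
      show b.1.2.1 0 = (ContinuousMap.id X) b.1.2.2.1 from b.2.1]
    exact congrArg _ hy
  · refine Quot.sound (Or.inr ⟨ha, hb, ?_⟩)
    show Quot.mk _ (cInner (kaU a s) (kaGamma a s 1)) =
      Quot.mk _ (cInner (kaU b s) (kaGamma b s 1))
    have hu : kaU a s = kaU b s := Subtype.ext (by
      show (1-s.1)*(a.1.1.1*(uC a.1.2.2.2).1) + s.1*(uC a.1.2.2.2).1 =
        (1-s.1)*(b.1.1.1*(uC b.1.2.2.2).1) + s.1*(uC b.1.2.2.2).1
      rw [show a.1.1 = 1 from ha, show b.1.1 = 1 from hb, hz])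
    have hv : kaGamma a s 1 = kaGamma b s 1 := by
      show a.1.2.1 (ellPt s a.1.1 1) = b.1.2.1 (ellPt s b.1.1 1)
      rw [ha, hb]
      have h1 : ellPt s 1 1 = 1 := Subtype.ext (by
        show (1-s.1)*(1*(1-1) + 1*1) + s.1*1 = 1
        ring)
      rw [h1]
      rw [show a.1.2.1 1 = pr1 X a.1.2.2.2 from a.2.2,
        show b.1.2.1 1 = pr1 X b.1.2.2.2 from b.2.2, hz]
    rw [hu, hv]

end SimpJoin
end Chunk7

section Chunk8
namespace SimpJoin
variable {X : Type} [TopologicalSpace X]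

lemma kaPre_zero (q : JP2 X) : kaPre q 0 = fPre (gPre q) := by
  apply Subtype.ext
  have t := q.1.1
  refine Prod.ext ?_ (Prod.ext ?_ (Prod.ext ?_ ?_))
  · show q.1.1 = tOf (gPt q.1.1 (uC q.1.2.2.2))
    apply Subtype.ext
    show q.1.1.1 = c1 (gPt _ _) + c2 (gPt _ _)
    simp only [gPt, mkD2_c1, mkD2_c2]
    ring
  · show kaGamma q 0 = fGamma (gPre q)
    apply ContinuousMap.ext
    intro v
    show q.1.2.1 (ellPt 0 q.1.1 v) = q.1.2.1 (eI q.1.1 (aPt (lam2 (gPt q.1.1 _)) v))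
    congr 1
    apply Subtype.ext
    show (1-((0:unitInterval):ℝ))*(v.1*(1-q.1.1.1) + q.1.1.1*q.1.1.1) +
      ((0:unitInterval):ℝ)*v.1 = _
    show _ = (c1 (aPt (lam2 (gPt q.1.1 _)) v) + c2 (aPt (lam2 (gPt q.1.1 _)) v)) *
      (1 - q.1.1.1) + q.1.1.1*q.1.1.1
    simp only [aPt, mkD2_c1, mkD2_c2, Set.Icc.coe_zero]
    rw [maxmin]
    ring
  · show q.1.2.1 (ellPt 0 q.1.1 0) = q.1.2.1 (eI q.1.1 vert0)
    congr 1
    apply Subtype.ext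
    show (1-((0:unitInterval):ℝ))*(((0:unitInterval):ℝ)*(1-q.1.1.1) +
      q.1.1.1*q.1.1.1) + ((0:unitInterval):ℝ)*((0:unitInterval):ℝ) =
      (c1 vert0 + c2 vert0) * (1 - q.1.1.1) + q.1.1.1*q.1.1.1
    have : c1 vert0 + c2 vert0 = 0 := by norm_num [vert0]
    rw [this]
    simp only [Set.Icc.coe_zero]
    ring
  · show Quot.mk _ (cInner (kaU q 0) (kaGamma q 0 1)) = Quot.mk _ (fInner (gPre q))
    congr 1
    apply Subtype.ext
    refine Prod.ext ?_ (Prod.ext ?_ (Prod.ext ?_ ?_))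
    · show kaU q 0 = lam2 (gPt q.1.1 (uC q.1.2.2.2))
      apply Subtype.ext
      show (1-((0:unitInterval):ℝ))*(q.1.1.1*(uC q.1.2.2.2).1) +
        ((0:unitInterval):ℝ)*(uC q.1.2.2.2).1 = c2 (gPt q.1.1 (uC q.1.2.2.2))
      simp only [gPt, mkD2_c2, Set.Icc.coe_zero]
      ring
    · show ContinuousMap.const _ (kaGamma q 0 1) = fDelta (gPre q)
      apply ContinuousMap.ext
      intro w
      show q.1.2.1 (ellPt 0 q.1.1 1) = q.1.2.1 (eI q.1.1 (ePt w))
      congr 1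
      apply Subtype.ext
      show (1-((0:unitInterval):ℝ))*(((1:unitInterval):ℝ)*(1-q.1.1.1) +
        q.1.1.1*q.1.1.1) + ((0:unitInterval):ℝ)*((1:unitInterval):ℝ) =
        (c1 (ePt w) + c2 (ePt w)) * (1 - q.1.1.1) + q.1.1.1*q.1.1.1
      have : c1 (ePt w) + c2 (ePt w) = 1 := by simp only [ePt, mkD2_c1, mkD2_c2]; ring
      rw [this]
      simp only [Set.Icc.coe_zero, Set.Icc.coe_one]
      ring
    · show kaGamma q 0 1 = (gPre q).2 vert1
      show q.1.2.1 (ellPt 0 q.1.1 1) = q.1.2.1 (eI q.1.1 vert1)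
      congr 1
      apply Subtype.ext
      show (1-((0:unitInterval):ℝ))*(((1:unitInterval):ℝ)*(1-q.1.1.1) +
        q.1.1.1*q.1.1.1) + ((0:unitInterval):ℝ)*((1:unitInterval):ℝ) =
        (c1 vert1 + c2 vert1) * (1 - q.1.1.1) + q.1.1.1*q.1.1.1
      have : c1 vert1 + c2 vert1 = 1 := by norm_num [vert1]
      rw [this]
      simp only [Set.Icc.coe_zero, Set.Icc.coe_one]
      ring
    · show kaGamma q 0 1 = (gPre q).2 vert2
      show q.1.2.1 (ellPt 0 q.1.1 1) = q.1.2.1 (eI q.1.1 vert2)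
      congr 1
      apply Subtype.ext
      show (1-((0:unitInterval):ℝ))*(((1:unitInterval):ℝ)*(1-q.1.1.1) +
        q.1.1.1*q.1.1.1) + ((0:unitInterval):ℝ)*((1:unitInterval):ℝ) =
        (c1 vert2 + c2 vert2) * (1 - q.1.1.1) + q.1.1.1*q.1.1.1
      have : c1 vert2 + c2 vert2 = 1 := by norm_num [vert2]
      rw [this]
      simp only [Set.Icc.coe_zero, Set.Icc.coe_one]
      ring

lemma ellPt_one_left (t v : unitInterval) : ellPt 1 t v = v :=
  Subtype.ext (by
    show (1-((1:unitInterval):ℝ))*(v.1*(1-t.1) + t.1*t.1) + ((1:unitInterval):ℝ)*v.1 = v.1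
    simp only [Set.Icc.coe_one]
    ring)

lemma kaPre_one (q : JP2 X) : kaPre q 1 = mPre q := by
  apply Subtype.ext
  refine Prod.ext rfl (Prod.ext ?_ (Prod.ext ?_ ?_))
  · show kaGamma q 1 = q.1.2.1
    apply ContinuousMap.ext
    intro v
    show q.1.2.1 (ellPt 1 q.1.1 v) = q.1.2.1 v
    rw [ellPt_one_left]
  · show q.1.2.1 (ellPt 1 q.1.1 0) = q.1.2.2.1
    rw [ellPt_one_left]
    exact q.2.1
  · show Quot.mk _ (cInner (kaU q 1) (kaGamma q 1 1)) =
      Quot.mk _ (cInner (uC q.1.2.2.2) (q.1.2.1 1))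
    congr 1
    have h1 : kaU q 1 = uC q.1.2.2.2 := Subtype.ext (by
      show (1-((1:unitInterval):ℝ))*(q.1.1.1*(uC q.1.2.2.2).1) +
        ((1:unitInterval):ℝ)*(uC q.1.2.2.2).1 = (uC q.1.2.2.2).1
      simp only [Set.Icc.coe_one]
      ring)
    have h2 : kaGamma q 1 1 = q.1.2.1 1 := by
      show q.1.2.1 (ellPt 1 q.1.1 1) = q.1.2.1 1
      rw [ellPt_one_left]
    rw [h1, h2]

/-- `K_A` packaged. -/
noncomputable def KAmk : C(JP2 X × unitInterval, JQ2 X) :=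
  ⟨fun w => Quot.mk _ (kaPre w.1 w.2),
    continuous_quot_mk.comp (by
      apply Continuous.subtype_mk
      refine (by fun_prop : Continuous fun w : JP2 X × unitInterval => w.1.1.1).prodMk
        ((ContinuousMap.curry KAF).continuous.prodMk ?_)
      have hg0 : Continuous fun w : JP2 X × unitInterval => kaGamma w.1 w.2 0 :=
        KAF.continuous.comp (continuous_id.prodMk continuous_const)
      have hg1 : Continuous fun w : JP2 X × unitInterval => kaGamma w.1 w.2 1 :=
        KAF.continuous.comp (continuous_id.prodMk continuous_const)
      have hu : Continuous fun w : JP2 X × unitInterval => kaU w.1 w.2 := by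
        apply Continuous.subtype_mk
        have h1 : Continuous fun w : JP2 X × unitInterval => (w.1.1.1 : ℝ) := by fun_prop
        have h2 : Continuous fun w : JP2 X × unitInterval => ((uC w.1.1.2.2.2 : unitInterval) : ℝ) := by
          have := continuous_uC (X := X)
          fun_prop
        have h3 : Continuous fun w : JP2 X × unitInterval => (w.2 : ℝ) := by fun_prop
        fun_prop
      exact hg0.prodMk (continuous_quot_mk.comp (continuous_cInner hu hg1)))⟩

noncomputable def KALift : JQ2 X → C(unitInterval, JQ2 X) :=
  Quot.lift (fun q => (ContinuousMap.curry KAmk) q)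
    (fun a b h => ContinuousMap.ext fun s => kawd s a b h)

lemma continuous_KALift : Continuous (KALift : JQ2 X → C(unitInterval, JQ2 X)) :=
  continuous_quot_lift _ (ContinuousMap.curry KAmk).continuous

noncomputable def KAHom : ((fMap : C(Simp2 X, JQ2 X)).comp gMap).Homotopy mMap where
  toFun := fun w => KALift w.2 w.1
  continuous_toFun := by
    have h := (ContinuousMap.uncurry
      (⟨KALift, continuous_KALift⟩ : C(JQ2 X, C(unitInterval, JQ2 X)))).continuous
    exact h.comp (continuous_snd.prodMk continuous_fst)
  map_zero_left := by
    intro x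
    induction x using Quot.ind with
    | _ q =>
      show Quot.mk _ (kaPre q 0) = fMap (gMap (Quot.mk _ q))
      rw [gMap_mk, fMap_mk, kaPre_zero]
  map_one_left := by
    intro x
    induction x using Quot.ind with
    | _ q =>
      show Quot.mk _ (kaPre q 1) = mMap (Quot.mk _ q)
      rw [mMap_mk, kaPre_one]

lemma KAHom_over (s : unitInterval) (b : JQ2 X) :
    pr2 X (KAHom (s, b)) = pr2 X b := by
  induction b using Quot.ind with
  | _ q =>
    show pr2 X (Quot.mk _ (kaPre q s)) = pr2 X (Quot.mk _ q)
    rw [pr2_mk, pr2_mk]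
    show q.1.2.1 (ellPt s q.1.1 q.1.1) = q.1.2.1 q.1.1
    rw [ellPt_self]

end SimpJoin
end Chunk8

section Chunk9
namespace SimpJoin
variable {X : Type} [TopologicalSpace X]

def phiPt (u s w : unitInterval) : unitInterval :=
  ⟨(1-s.1)*u.1 + s.1*w.1, convex_mem s.2.1 s.2.2 u.2 w.2⟩

lemma phiPt_self (u s : unitInterval) : phiPt u s u =
    u := Subtype.ext (by show (1-s.1)*u.1 + s.1*u.1 = u.1; ring)

lemma phiPt_zero_right (u s : unitInterval) (h : u = 0) : phiPt u s 0 = 0 :=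
  Subtype.ext (by
    rw [h]
    show (1-s.1)*((0:unitInterval):ℝ) + s.1*((0:unitInterval):ℝ) = ((0:unitInterval):ℝ)
    simp)

lemma phiPt_one_right (u s : unitInterval) (h : u = 1) : phiPt u s 1 = 1 :=
  Subtype.ext (by
    rw [h]
    show (1-s.1)*((1:unitInterval):ℝ) + s.1*((1:unitInterval):ℝ) = ((1:unitInterval):ℝ)
    simp)

lemma phiPt_s_one (u w : unitInterval) : phiPt u 1 w = w :=
  Subtype.ext (by
    show (1-((1:unitInterval):ℝ))*u.1 + ((1:unitInterval):ℝ)*w.1 = w.1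
    simp only [Set.Icc.coe_one]; ring)

lemma phiPt_s_zero (u w : unitInterval) : phiPt u 0 w = u :=
  Subtype.ext (by
    show (1-((0:unitInterval):ℝ))*u.1 + ((0:unitInterval):ℝ)*w.1 = u.1
    simp only [Set.Icc.coe_zero]; ring)

lemma continuous_phiPt {α : Type} [TopologicalSpace α] {f g h : α → unitInterval}
    (hf : Continuous f) (hg : Continuous g) (hh : Continuous h) :
    Continuous fun x => phiPt (f x) (g x) (h x) := by
  apply Continuous.subtype_mk
  have h1 : Continuous fun x => (f x : ℝ) := by fun_prop
  have h2 : Continuous fun x => (g x : ℝ) := by fun_prop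
  have h3 : Continuous fun x => (h x : ℝ) := by fun_prop
  fun_prop

/-- stage-B inner path family. -/
def KBF : C((JP1 X × unitInterval) × unitInterval, X) :=
  ⟨fun w => w.1.1.1.2.1 (phiPt w.1.1.1.1 w.1.2 w.2),
    ContinuousEval.continuous_eval.comp
      ((by fun_prop : Continuous fun w : (JP1 X × unitInterval) × unitInterval =>
          w.1.1.1.2.1).prodMk
        (continuous_phiPt
          (by fun_prop : Continuous fun w : (JP1 X × unitInterval) × unitInterval => w.1.1.1.1)
          (continuous_snd.comp continuous_fst) continuous_snd))⟩

noncomputable def kbDelta (r : JP1 X) (s : unitInterval) : C(unitInterval, X) :=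
  (ContinuousMap.curry KBF) (r, s)

@[simp] lemma kbDelta_apply (r : JP1 X) (s w : unitInterval) :
    kbDelta r s w = r.1.2.1 (phiPt r.1.1 s w) := rfl

noncomputable def kbInner (r : JP1 X) (s : unitInterval) : JP1 X :=
  ⟨(r.1.1, kbDelta r s, kbDelta r s 0, kbDelta r s 1), rfl, rfl⟩

lemma zbwd (s : unitInterval) (a b : JP1 X)
    (h : JoinRel (ContinuousMap.id X) (ContinuousMap.id X) a b) :
    Quot.mk (JoinRel (ContinuousMap.id X) (ContinuousMap.id X)) (kbInner a s) =
    Quot.mk (JoinRel (ContinuousMap.id X) (ContinuousMap.id X)) (kbInner b s) := by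
  rcases h with ⟨ha, hb, hy⟩ | ⟨ha, hb, hy⟩
  · refine Quot.sound (Or.inl ⟨ha, hb, ?_⟩)
    show a.1.2.1 (phiPt a.1.1 s 0) = b.1.2.1 (phiPt b.1.1 s 0)
    rw [phiPt_zero_right _ _ ha, phiPt_zero_right _ _ hb]
    rw [show a.1.2.1 0 = (ContinuousMap.id X) a.1.2.2.1 from a.2.1,
      show b.1.2.1 0 = (ContinuousMap.id X) b.1.2.2.1 from b.2.1]
    exact congrArg _ hy
  · refine Quot.sound (Or.inr ⟨ha, hb, ?_⟩)
    show a.1.2.1 (phiPt a.1.1 s 1) = b.1.2.1 (phiPt b.1.1 s 1)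
    rw [phiPt_one_right _ _ ha, phiPt_one_right _ _ hb]
    rw [show a.1.2.1 1 = (ContinuousMap.id X) a.1.2.2.2 from a.2.2,
      show b.1.2.1 1 = (ContinuousMap.id X) b.1.2.2.2 from b.2.2]
    exact congrArg _ hy

noncomputable def ZBmk : C(JP1 X × unitInterval, JQ1 X) :=
  ⟨fun w => Quot.mk _ (kbInner w.1 w.2),
    continuous_quot_mk.comp (by
      apply Continuous.subtype_mk
      refine (by fun_prop : Continuous fun w : JP1 X × unitInterval => w.1.1.1).prodMk
        ((ContinuousMap.curry KBF).continuous.prodMk ?_)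
      have h0 : Continuous fun w : JP1 X × unitInterval => kbDelta w.1 w.2 0 :=
        KBF.continuous.comp (continuous_id.prodMk continuous_const)
      have h1 : Continuous fun w : JP1 X × unitInterval => kbDelta w.1 w.2 1 :=
        KBF.continuous.comp (continuous_id.prodMk continuous_const)
      exact h0.prodMk h1)⟩

noncomputable def ZBL : JQ1 X → C(unitInterval, JQ1 X) :=
  Quot.lift (fun r => (ContinuousMap.curry ZBmk) r)
    (fun a b h => ContinuousMap.ext fun s => zbwd s a b h)

lemma continuous_ZBL : Continuous (ZBL : JQ1 X → C(unitInterval, JQ1 X)) :=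
  continuous_quot_lift _ (ContinuousMap.curry ZBmk).continuous

@[simp] lemma ZBL_mk (r : JP1 X) (s : unitInterval) :
    ZBL (Quot.mk _ r) s = Quot.mk (JoinRel (ContinuousMap.id X) (ContinuousMap.id X))
      (kbInner r s) := rfl

lemma pr1_ZBL (z : JQ1 X) (s : unitInterval) : pr1 X (ZBL z s) = pr1 X z := by
  induction z using Quot.ind with
  | _ r =>
    rw [ZBL_mk, pr1_mk, pr1_mk]
    show r.1.2.1 (phiPt r.1.1 s r.1.1) = r.1.2.1 r.1.1
    rw [phiPt_self]

lemma ZBL_zero (z : JQ1 X) : ZBL z 0 = Quot.mk _ (cInner (uC z) (pr1 X z)) := by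
  induction z using Quot.ind with
  | _ r =>
    rw [ZBL_mk]
    congr 1
    apply Subtype.ext
    refine Prod.ext rfl (Prod.ext ?_ (Prod.ext ?_ ?_))
    · apply ContinuousMap.ext
      intro w
      show r.1.2.1 (phiPt r.1.1 0 w) = r.1.2.1 r.1.1
      rw [phiPt_s_zero]
    · show r.1.2.1 (phiPt r.1.1 0 0) = r.1.2.1 r.1.1
      rw [phiPt_s_zero]
    · show r.1.2.1 (phiPt r.1.1 0 1) = r.1.2.1 r.1.1
      rw [phiPt_s_zero]

lemma ZBL_one (z : JQ1 X) : ZBL z 1 = z := by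
  induction z using Quot.ind with
  | _ r =>
    rw [ZBL_mk]
    congr 1
    apply Subtype.ext
    refine Prod.ext rfl (Prod.ext ?_ (Prod.ext ?_ ?_))
    · apply ContinuousMap.ext
      intro w
      show r.1.2.1 (phiPt r.1.1 1 w) = r.1.2.1 w
      rw [phiPt_s_one]
    · show r.1.2.1 (phiPt r.1.1 1 0) = r.1.2.2.1
      rw [phiPt_s_one]
      exact r.2.1
    · show r.1.2.1 (phiPt r.1.1 1 1) = r.1.2.2.2
      rw [phiPt_s_one]
      exact r.2.2

/-- stage-B on outer representatives. -/
noncomputable def kbPre (q : JP2 X) (s : unitInterval) : JP2 X :=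
  ⟨(q.1.1, q.1.2.1, q.1.2.2.1, ZBL q.1.2.2.2 s), q.2.1, by
    rw [pr1_ZBL]; exact q.2.2⟩

lemma kbwd (s : unitInterval) (a b : JP2 X)
    (h : JoinRel (ContinuousMap.id X) (pr1 X) a b) :
    Quot.mk (JoinRel (ContinuousMap.id X) (pr1 X)) (kbPre a s) =
    Quot.mk (JoinRel (ContinuousMap.id X) (pr1 X)) (kbPre b s) := by
  rcases h with ⟨ha, hb, hy⟩ | ⟨ha, hb, hz⟩
  · exact Quot.sound (Or.inl ⟨ha, hb, hy⟩)
  · refine Quot.sound (Or.inr ⟨ha, hb, ?_⟩)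
    show ZBL a.1.2.2.2 s = ZBL b.1.2.2.2 s
    rw [hz]

noncomputable def KBmk : C(JP2 X × unitInterval, JQ2 X) :=
  ⟨fun w => Quot.mk _ (kbPre w.1 w.2),
    continuous_quot_mk.comp (by
      apply Continuous.subtype_mk
      refine (by fun_prop : Continuous fun w : JP2 X × unitInterval => w.1.1.1).prodMk
        ((by fun_prop : Continuous fun w : JP2 X × unitInterval => w.1.1.2.1).prodMk
          ((by fun_prop : Continuous fun w : JP2 X × unitInterval => w.1.1.2.2.1).prodMk ?_))
      have h := (ContinuousMap.uncurry
        (⟨ZBL, continuous_ZBL⟩ : C(JQ1 X, C(unitInterval, JQ1 X)))).continuous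
      exact h.comp ((by fun_prop : Continuous fun w : JP2 X × unitInterval =>
        w.1.1.2.2.2).prodMk continuous_snd))⟩

noncomputable def KBLift : JQ2 X → C(unitInterval, JQ2 X) :=
  Quot.lift (fun q => (ContinuousMap.curry KBmk) q)
    (fun a b h => ContinuousMap.ext fun s => kbwd s a b h)

lemma continuous_KBLift : Continuous (KBLift : JQ2 X → C(unitInterval, JQ2 X)) :=
  continuous_quot_lift _ (ContinuousMap.curry KBmk).continuous

noncomputable def KBHom : (mMap : C(JQ2 X, JQ2 X)).Homotopy
    (ContinuousMap.id (JQ2 X)) where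
  toFun := fun w => KBLift w.2 w.1
  continuous_toFun := by
    have h := (ContinuousMap.uncurry
      (⟨KBLift, continuous_KBLift⟩ : C(JQ2 X, C(unitInterval, JQ2 X)))).continuous
    exact h.comp (continuous_snd.prodMk continuous_fst)
  map_zero_left := by
    intro x
    induction x using Quot.ind with
    | _ q =>
      show Quot.mk _ (kbPre q 0) = mMap (Quot.mk _ q)
      rw [mMap_mk]
      apply congrArg
      apply Subtype.ext
      refine Prod.ext rfl (Prod.ext rfl (Prod.ext rfl ?_))
      show ZBL q.1.2.2.2 0 = Quot.mk _ (cInner (uC q.1.2.2.2) (q.1.2.1 1))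
      rw [ZBL_zero]
      rw [show q.1.2.1 1 = pr1 X q.1.2.2.2 from q.2.2]
  map_one_left := by
    intro x
    induction x using Quot.ind with
    | _ q =>
      show Quot.mk _ (kbPre q 1) = Quot.mk _ q
      apply congrArg
      apply Subtype.ext
      refine Prod.ext rfl (Prod.ext rfl (Prod.ext rfl ?_))
      show ZBL q.1.2.2.2 1 = q.1.2.2.2
      rw [ZBL_one]

lemma KBHom_over (s : unitInterval) (b : JQ2 X) :
    pr2 X (KBHom (s, b)) = pr2 X b := by
  induction b using Quot.ind with
  | _ q =>
    show pr2 X (Quot.mk _ (kbPre q s)) = pr2 X (Quot.mk _ q)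
    rw [pr2_mk, pr2_mk]
    rfl

end SimpJoin
end Chunk9

/-- `Simp₂X` is homotopy equivalent over `X` to `X *_X (X *_X X)`, where `X` is an
`X`-space via the identity map: there are maps of `X`-spaces in both directions whose
composites are homotopic to the identities through maps over `X`. -/
theorem simp2_homotopyEquiv_over (X : Type) [TopologicalSpace X] :
    ∃ (f : C(Simp2 X, FibJoin (ContinuousMap.id X)
        (fibJoinProj (ContinuousMap.id X) (ContinuousMap.id X))))
      (g : C(FibJoin (ContinuousMap.id X)
        (fibJoinProj (ContinuousMap.id X) (ContinuousMap.id X)), Simp2 X))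
      (H : (g.comp f).Homotopy (ContinuousMap.id (Simp2 X)))
      (K : (f.comp g).Homotopy (ContinuousMap.id (FibJoin (ContinuousMap.id X)
        (fibJoinProj (ContinuousMap.id X) (ContinuousMap.id X))))),
      (∀ a, fibJoinProj (ContinuousMap.id X)
          (fibJoinProj (ContinuousMap.id X) (ContinuousMap.id X)) (f a) = simp2Proj X a) ∧
      (∀ b, simp2Proj X (g b) = fibJoinProj (ContinuousMap.id X)
          (fibJoinProj (ContinuousMap.id X) (ContinuousMap.id X)) b) ∧
      (∀ (t : unitInterval) (a : Simp2 X), simp2Proj X (H (t, a)) = simp2Proj X a) ∧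
      (∀ (t : unitInterval) (b : FibJoin (ContinuousMap.id X)
          (fibJoinProj (ContinuousMap.id X) (ContinuousMap.id X))),
        fibJoinProj (ContinuousMap.id X)
          (fibJoinProj (ContinuousMap.id X) (ContinuousMap.id X)) (K (t, b)) =
        fibJoinProj (ContinuousMap.id X)
          (fibJoinProj (ContinuousMap.id X) (ContinuousMap.id X)) b) := by
  refine ⟨SimpJoin.fMap, SimpJoin.gMap, SimpJoin.HHom, SimpJoin.KAHom.trans SimpJoin.KBHom,
    ?_, ?_, ?_, ?_⟩
  · exact fun a => SimpJoin.fMap_proj a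
  · exact fun b => SimpJoin.gMap_proj b
  · exact fun t a => SimpJoin.HHom_over t a
  · intro t b
    rw [ContinuousMap.Homotopy.trans_apply]
    split_ifs
    · exact SimpJoin.KAHom_over _ b
    · exact SimpJoin.KBHom_over _ b
end

section
/- Let X be a topological space, regarded as an X-space via the identity map. For every n ≥ 1, the structure map of the left-iterated fiberwise join X^{*n} := ((X *_X X) *_X ⋯) *_X X (evaluation at the distinguished point, with X^{*1} = X) is a homotopy equivalence X^{*n} → X. In particular, for n = 2 the evaluation map X *_X X → X, [t, γ, x, x'] ↦ γ(t), is a homotopy equivalence. -/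
/-!
STATEMENT 4: For every `n ≥ 1`, the structure map of the left-iterated fiberwise join
`X^{*n}` (with `X^{*1} = X`, regarded as an `X`-space via the identity) is a homotopy
equivalence `X^{*n} → X`.
-/

open unitInterval

variable {X Y Z : Type} [TopologicalSpace X] [TopologicalSpace Y] [TopologicalSpace Z]

/- ----------------- auxiliary development ----------------- -/

namespace IterJoinAux

/-- Projection `ℝ → [0,1]`. -/
noncomputable abbrev pr (r : ℝ) : unitInterval := Set.projIcc (0:ℝ) 1 zero_le_one r

lemma pr_zero : pr 0 = 0 := by
  rw [pr, Set.projIcc_left]; rfl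

lemma pr_one : pr 1 = 1 := by
  rw [pr, Set.projIcc_right]; rfl

lemma pr_val (s : unitInterval) : pr s.1 = s := Set.projIcc_val zero_le_one s

/-- The cutoff `1 - min(2u,1)(1-t)`. -/
noncomputable def cut (t u : unitInterval) : ℝ := 1 - min (2*u.1) 1 * (1 - t.1)

lemma cut_mem (t u : unitInterval) : cut t u ∈ Set.Icc (0:ℝ) 1 := by
  have ht := t.2.1; have ht1 := t.2.2; have hu := u.2.1; have hu1 := u.2.2
  have h1 : min (2*u.1) 1 ≤ 1 := min_le_right _ _
  have h2 : (0:ℝ) ≤ min (2*u.1) 1 := le_min (by linarith) zero_le_one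
  simp only [cut]
  constructor <;> nlinarith

lemma cut_zero (t : unitInterval) : cut t 0 = 1 := by
  simp [cut]

lemma cut_one (t : unitInterval) : cut t 1 = t.1 := by
  have : min (2*(1:unitInterval).1) 1 = 1 := by norm_num
  simp only [cut, this]; ring

lemma cut_continuous {α : Type*} [TopologicalSpace α] {f g : α → unitInterval}
    (hf : Continuous f) (hg : Continuous g) : Continuous fun x => cut (f x) (g x) := by
  unfold cut; fun_prop

/-- The slide `t + max(2u-1,0)(1-t)`. -/
noncomputable def sl (t u : unitInterval) : ℝ := t.1 + max (2*u.1 - 1) 0 * (1 - t.1)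

lemma sl_zero (t : unitInterval) : sl t 0 = t.1 := by
  simp [sl]

lemma sl_one (t : unitInterval) : sl t 1 = 1 := by
  have : max (2*(1:unitInterval).1 - 1) 0 = 1 := by norm_num
  simp only [sl, this]; ring

lemma sl_continuous {α : Type*} [TopologicalSpace α] {f g : α → unitInterval}
    (hf : Continuous f) (hg : Continuous g) : Continuous fun x => sl (f x) (g x) := by
  unfold sl; fun_prop

lemma pr_continuous {α : Type*} [TopologicalSpace α] {f : α → ℝ} (hf : Continuous f) :
    Continuous fun x => pr (f x) := continuous_projIcc.comp hf

lemma eval_continuous {α : Type*} [TopologicalSpace α] {f : α → C(unitInterval, X)}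
    {g : α → unitInterval} (hf : Continuous f) (hg : Continuous g) :
    Continuous fun x => f x (g x) := continuous_eval.comp (hf.prodMk hg)

variable (pY : C(Y, X))

/-- The master evaluation used to define the contracting homotopy:
`((q, u), s) ↦ γ_q (min s (cut t u))`. -/
noncomputable def bigEval :
    C((JoinPre pY (ContinuousMap.id X) × unitInterval) × unitInterval, X) where
  toFun p := p.1.1.1.2.1 (pr (min p.2.1 (cut p.1.1.1.1 p.1.2)))
  continuous_toFun := by
    apply eval_continuous (by fun_prop)
    exact pr_continuous ((by fun_prop : Continuous fun p : (JoinPre pY (ContinuousMap.id X) × unitInterval) × unitInterval => p.2.1).min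
      (cut_continuous (by fun_prop) (by fun_prop)))

@[simp] lemma bigEval_apply (q : JoinPre pY (ContinuousMap.id X)) (u s : unitInterval) :
    bigEval pY ((q, u), s) = q.1.2.1 (pr (min s.1 (cut q.1.1 u))) := rfl

/-- The non-quotiented homotopy `(q, u) ↦ (sl t u, γ(min · (cut t u)), y, γ(cut t u))`. -/
noncomputable def hMap :
    C(JoinPre pY (ContinuousMap.id X) × unitInterval, JoinPre pY (ContinuousMap.id X)) where
  toFun p :=
    ⟨(pr (sl p.1.1.1 p.2), (bigEval pY).curry p, p.1.1.2.2.1, (bigEval pY).curry p 1),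
      by
        show (bigEval pY) (p, 0) = pY p.1.1.2.2.1
        have h0 : min (0:unitInterval).1 (cut p.1.1.1 p.2) = 0 :=
          min_eq_left (cut_mem p.1.1.1 p.2).1
        rw [bigEval_apply, h0, pr_zero, p.1.2.1],
      rfl⟩
  continuous_toFun := by
    apply Continuous.subtype_mk
    refine Continuous.prodMk ?_ (Continuous.prodMk ?_ (Continuous.prodMk ?_ ?_))
    · exact pr_continuous (sl_continuous (by fun_prop) (by fun_prop))
    · exact ((bigEval pY).curry).continuous
    · fun_prop
    · exact eval_continuous ((bigEval pY).curry.continuous) continuous_const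

lemma hMap_fst (q : JoinPre pY (ContinuousMap.id X)) (u : unitInterval) :
    ((hMap pY) (q, u)).1.1 = pr (sl q.1.1 u) := rfl

lemma hMap_path (q : JoinPre pY (ContinuousMap.id X)) (u s : unitInterval) :
    ((hMap pY) (q, u)).1.2.1 s = q.1.2.1 (pr (min s.1 (cut q.1.1 u))) := rfl

lemma hMap_y (q : JoinPre pY (ContinuousMap.id X)) (u : unitInterval) :
    ((hMap pY) (q, u)).1.2.2.1 = q.1.2.2.1 := rfl

lemma hMap_z (q : JoinPre pY (ContinuousMap.id X)) (u : unitInterval) :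
    ((hMap pY) (q, u)).1.2.2.2 = q.1.2.1 (pr (min (1:ℝ) (cut q.1.1 u))) := rfl

/-- Well-definedness of the homotopy on the quotient. -/
lemma hMap_wd {a b : JoinPre pY (ContinuousMap.id X)}
    (h : JoinRel pY (ContinuousMap.id X) a b) (u : unitInterval) :
    Quot.mk (JoinRel pY (ContinuousMap.id X)) ((hMap pY) (a, u)) =
      Quot.mk (JoinRel pY (ContinuousMap.id X)) ((hMap pY) (b, u)) := by
  have hu0 := u.2.1; have hu1 := u.2.2
  rcases h with ⟨ha, hb, hy⟩ | ⟨ha, hb, hz⟩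
  · -- t = 0 on both sides, same y
    rcases le_or_gt u.1 (1/2 : ℝ) with hu | hu
    · -- slide still at 0: use the left-edge relation
      apply Quot.sound; left
      have hsl : ∀ c : JoinPre pY (ContinuousMap.id X), c.1.1 = 0 →
          ((hMap pY) (c, u)).1.1 = 0 := by
        intro c hc
        rw [hMap_fst, sl, hc]
        have : max (2*u.1 - 1) 0 = 0 := max_eq_right (by linarith)
        simp [this, pr_zero]
      exact ⟨hsl a ha, hsl b hb, by rw [hMap_y, hMap_y, hy]⟩
    · -- cutoff reached 0: the two images are literally equal
      have hmin : min (2*u.1) 1 = 1 := min_eq_right (by linarith)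
      have hcuta : cut a.1.1 u = 0 := by rw [cut, hmin, ha]; simp
      have hcutb : cut b.1.1 u = 0 := by rw [cut, hmin, hb]; simp
      congr 1
      apply Subtype.ext
      have hpath : ∀ s : unitInterval,
          ((hMap pY) (a, u)).1.2.1 s = ((hMap pY) (b, u)).1.2.1 s := by
        intro s
        rw [hMap_path, hMap_path, hcuta, hcutb,
          min_eq_right s.2.1, pr_zero, a.2.1, b.2.1, hy]
      refine Prod.ext ?_ (Prod.ext ?_ (Prod.ext ?_ ?_))
      · rw [hMap_fst, hMap_fst, sl, sl, ha, hb]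
      · exact ContinuousMap.ext hpath
      · rw [hMap_y, hMap_y, hy]
      · rw [hMap_z, hMap_z, hcuta, hcutb]
        rw [min_eq_right (by norm_num : (0:ℝ) ≤ 1), pr_zero, a.2.1, b.2.1, hy]
  · -- t = 1 on both sides, same z
    apply Quot.sound; right
    have hone : ∀ c : JoinPre pY (ContinuousMap.id X), c.1.1 = 1 →
        ((hMap pY) (c, u)).1.1 = 1 ∧ ((hMap pY) (c, u)).1.2.2.2 = c.1.2.2.2 := by
      intro c hc
      have hcut : cut c.1.1 u = 1 := by rw [cut, hc]; simp
      constructor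
      · rw [hMap_fst, sl, hc]
        show pr ((1:ℝ) + _ * (1 - (1:ℝ))) = 1
        rw [show (1:ℝ) + max (2*u.1 - 1) 0 * (1 - (1:ℝ)) = 1 by ring, pr_one]
      · rw [hMap_z, hcut, min_self, pr_one, c.2.2]; rfl
    exact ⟨(hone a ha).1, (hone b hb).1, by rw [(hone a ha).2, (hone b hb).2, hz]⟩

/-- The canonical section of the join projection, given a section of `pY`. -/
noncomputable def secMap (s : C(X, Y)) (hs : ∀ x, pY (s x) = x) :
    C(X, FibJoin pY (ContinuousMap.id X)) where
  toFun x := Quot.mk _ ⟨(1, ContinuousMap.const _ x, s x, x), (hs x).symm, rfl⟩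
  continuous_toFun := by
    apply continuous_quot_mk.comp
    apply Continuous.subtype_mk
    exact continuous_const.prodMk (ContinuousMap.continuous_const'.prodMk
      (s.continuous.prodMk continuous_id))

/-- The quotiented homotopy as a map into paths. -/
noncomputable def Phi : C(JoinPre pY (ContinuousMap.id X) × unitInterval,
    FibJoin pY (ContinuousMap.id X)) :=
  ⟨fun p => Quot.mk _ ((hMap pY) p), continuous_quot_mk.comp (hMap pY).continuous⟩

/-- The homotopy, curried over the quotient. -/
noncomputable def GG : C(FibJoin pY (ContinuousMap.id X),
    C(unitInterval, FibJoin pY (ContinuousMap.id X))) where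
  toFun := Quot.lift (fun q => (Phi pY).curry q)
    (fun a b h => ContinuousMap.ext fun u => hMap_wd pY h u)
  continuous_toFun := continuous_quot_lift _ ((Phi pY).curry.continuous)

/-- The deformation of the join onto the image of the section. -/
noncomputable def bigH :
    C(unitInterval × FibJoin pY (ContinuousMap.id X), FibJoin pY (ContinuousMap.id X)) :=
  (GG pY).uncurry.comp ContinuousMap.prodSwap

lemma bigH_apply (q : JoinPre pY (ContinuousMap.id X)) (u : unitInterval) :
    bigH pY (u, Quot.mk _ q) = Quot.mk _ ((hMap pY) (q, u)) := by
  simp only [bigH, GG, Phi, ContinuousMap.comp_apply, ContinuousMap.uncurry_apply,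
    ContinuousMap.coe_mk, ContinuousMap.prodSwap_apply, Function.uncurry_apply_pair,
    ContinuousMap.curry_apply]

/-- The join of `Y` with `X` over `X` is homotopy equivalent to `X` via the projection,
whenever `pY` admits a section. -/
noncomputable def joinEquiv (s : C(X, Y)) (hs : ∀ x, pY (s x) = x) :
    ContinuousMap.HomotopyEquiv (FibJoin pY (ContinuousMap.id X)) X where
  toFun := fibJoinProj pY (ContinuousMap.id X)
  invFun := secMap pY s hs
  left_inv := by
    refine ⟨ContinuousMap.Homotopy.symm ?_⟩
    refine ⟨⟨bigH pY, (bigH pY).continuous⟩, ?_, ?_⟩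
    · -- at time 0 this is the identity
      intro x
      induction x using Quot.ind with
      | _ q =>
        show bigH pY (0, Quot.mk _ q) = Quot.mk _ q
        rw [bigH_apply]
        congr 1
        apply Subtype.ext
        refine Prod.ext ?_ (Prod.ext ?_ (Prod.ext ?_ ?_))
        · rw [hMap_fst, sl_zero, pr_val]
        · refine ContinuousMap.ext fun u => ?_
          rw [hMap_path, cut_zero, min_eq_left u.2.2, pr_val]
        · rw [hMap_y]
        · rw [hMap_z, cut_zero, min_self, pr_one, q.2.2]; rfl
    · -- at time 1 this is the section composed with the projection
      intro x
      induction x using Quot.ind with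
      | _ q =>
        show bigH pY (1, Quot.mk _ q) =
          secMap pY s hs ((fibJoinProj pY (ContinuousMap.id X)) (Quot.mk _ q))
        rw [bigH_apply]
        apply Quot.sound
        right
        refine ⟨?_, rfl, ?_⟩
        · rw [hMap_fst, sl_one, pr_one]
        · show ((hMap pY) (q, 1)).1.2.2.2 = q.1.2.1 q.1.1
          rw [hMap_z, cut_one, min_eq_right q.1.1.2.2, pr_val]
  right_inv := by
    have : (fibJoinProj pY (ContinuousMap.id X)).comp (secMap pY s hs) =
        ContinuousMap.id X := ContinuousMap.ext fun x => rfl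
    rw [this]

lemma joinEquiv_toFun (s : C(X, Y)) (hs : ∀ x, pY (s x) = x) :
    (joinEquiv pY s hs).toFun = fibJoinProj pY (ContinuousMap.id X) := rfl

end IterJoinAux

/-- A space over `X`: a topological space together with a continuous map to `X`. -/
structure OverSpace (X : Type) [TopologicalSpace X] where
  carrier : Type
  top : TopologicalSpace carrier
  proj : @ContinuousMap carrier X top _

attribute [instance] OverSpace.top

/-- The left-iterated fiberwise join: `iterJoin X n` is `X^{*(n+1)}`, so that
`iterJoin X 0 = X^{*1} = X` (projection the identity) and
`iterJoin X (n+1) = (iterJoin X n) *_X X`, with structure map the evaluation at the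
distinguished point. -/
noncomputable def iterJoin (X : Type) [TopologicalSpace X] : ℕ → OverSpace X
  | 0 => ⟨X, inferInstance, ContinuousMap.id X⟩
  | n + 1 =>
    ⟨FibJoin (iterJoin X n).proj (ContinuousMap.id X), inferInstance,
      fibJoinProj (iterJoin X n).proj (ContinuousMap.id X)⟩

/-- Every iterated join projection admits a continuous section. -/
theorem iterJoin_exists_sec (X : Type) [TopologicalSpace X] (n : ℕ) :
    ∃ s : C(X, (iterJoin X n).carrier), ∀ x, (iterJoin X n).proj (s x) = x := by
  induction n with
  | zero => exact ⟨ContinuousMap.id X, fun x => rfl⟩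
  | succ n ih =>
    obtain ⟨s, hs⟩ := ih
    exact ⟨IterJoinAux.secMap (iterJoin X n).proj s hs, fun x => rfl⟩

/-- For every `n ≥ 1` the structure map `X^{*n} → X` of the left-iterated fiberwise join
is a homotopy equivalence.  (Here `iterJoin X n` is `X^{*(n+1)}`, so quantifying over all
`n : ℕ` covers exactly the joins `X^{*n}` with `n ≥ 1`; the case `n = 0` of `iterJoin`
is `X^{*2} = X *_X X` with the evaluation map `[t, γ, x, x'] ↦ γ t`.) -/
theorem iterJoin_proj_homotopyEquiv (X : Type) [TopologicalSpace X] (n : ℕ) :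
    ∃ h : ContinuousMap.HomotopyEquiv (iterJoin X n).carrier X,
      h.toFun = (iterJoin X n).proj := by
  cases n with
  | zero => exact ⟨ContinuousMap.HomotopyEquiv.refl X, rfl⟩
  | succ n =>
    obtain ⟨s, hs⟩ := iterJoin_exists_sec X n
    exact ⟨IterJoinAux.joinEquiv (iterJoin X n).proj s hs, rfl⟩
end
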